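/- arXiv:2503.00451 — 3 statements merged into one kernel-verified Lean document; each statement's English description precedes it below -/
import Mathlib

section
/- Let p > 0 and n ≥ 1. Let f be a probability density on R^n with finite p-th moment and finite entropy ∫ f log f. Then ∫ |x|^p f(x) dx ≥ (D_{n,p,1}/(n ω_n)^{p/n}) exp(-(p/n) ∫ f log f), with equality if and only if f(x) = a e^{-|bx|^p} a.e. for some a, b > 0. -/
open MeasureTheory

open MeasureTheory Real Set Module

lemma gibbs_pt {u s : ℝ} (hu : 0 ≤ u) (hs : 0 < s) :
    0 ≤ u * Real.log u - u * Real.log s - u + s ∧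
      (u * Real.log u - u * Real.log s - u + s = 0 ↔ u = s) := by
  rcases eq_or_lt_of_le hu with h0 | hu'
  · subst h0
    constructor
    · simp; positivity
    · simp only [Real.log_zero, mul_zero, zero_mul, sub_zero, zero_sub, sub_self, neg_zero,
        zero_add]
      exact ⟨fun h => absurd h hs.ne', fun h => absurd h.symm hs.ne'⟩
  · have hlog : Real.log s = Real.log u + (Real.log s - Real.log u) := by ring
    have hy : s = u * Real.exp (Real.log s - Real.log u) := by
      rw [Real.exp_sub, Real.exp_log hs, Real.exp_log hu']
      field_simp
    set y := Real.log s - Real.log u with hydef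
    have key : u * Real.log u - u * Real.log s - u + s = u * (Real.exp y - y - 1) := by
      rw [hlog]
      rw [hy]
      ring
    constructor
    · rw [key]
      exact mul_nonneg hu (by linarith [Real.add_one_le_exp y])
    · rw [key, mul_eq_zero]
      constructor
      · rintro (h | h)
        · exact absurd h.symm hu'.ne
        · have hy0 : y = 0 := by
            by_contra hne
            have := Real.add_one_lt_exp hne
            linarith
          have : Real.log u = Real.log s := by
            have := hydef ▸ hy0
            linarith [sub_eq_zero.mp (hydef ▸ hy0)]
          calc u = Real.exp (Real.log u) := (Real.exp_log hu').symm
            _ = Real.exp (Real.log s) := by rw [this]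
            _ = s := Real.exp_log hs
      · rintro rfl
        right
        simp [hydef]

lemma pow_le_exp_aux {x : ℝ} (hx : 0 ≤ x) {m : ℕ} (hm : 0 < m) :
    x ^ m ≤ (m : ℝ) ^ m * Real.exp x := by
  have hmR : (0:ℝ) < m := Nat.cast_pos.mpr hm
  have h1 : x / m ≤ Real.exp (x / m) := by
    have := Real.add_one_le_exp (x / m)
    linarith
  have h2 : (x / m) ^ m ≤ Real.exp (x / m) ^ m :=
    pow_le_pow_left₀ (div_nonneg hx hmR.le) h1 m
  rw [← Real.exp_nat_mul] at h2
  have hx2 : (m : ℝ) * (x / m) = x := by field_simp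
  rw [hx2] at h2
  have : x ^ m = (m : ℝ) ^ m * (x / m) ^ m := by
    rw [div_pow]
    field_simp
  rw [this]
  exact mul_le_mul_of_nonneg_left h2 (by positivity)

lemma integrable_exp_neg_mul_rpow_norm (n : ℕ) (hn : 1 ≤ n) {p t : ℝ} (hp : 0 < p) (ht : 0 < t) :
    Integrable (fun x : EuclideanSpace ℝ (Fin n) => Real.exp (-(t * ‖x‖ ^ p))) volume := by
  set m : ℕ := ⌈((n:ℝ) + 1) / p⌉₊ + 1 with hmdef
  have hm0 : 0 < m := Nat.succ_pos _
  have hpm : ((n:ℝ) + 1) ≤ p * m := by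
    have h1 : ((n:ℝ)+1)/p ≤ (⌈((n:ℝ) + 1) / p⌉₊ : ℝ) := Nat.le_ceil _
    have h2 : (⌈((n:ℝ) + 1) / p⌉₊ : ℝ) ≤ (m : ℝ) := by
      rw [hmdef]; push_cast; linarith
    calc ((n:ℝ)+1) = (((n:ℝ)+1)/p) * p := by field_simp
      _ ≤ (m : ℝ) * p := by
          apply mul_le_mul_of_nonneg_right (le_trans h1 h2) hp.le
      _ = p * m := by ring
  set C : ℝ := 2 ^ ((n:ℝ) + 1) * ((m:ℝ) ^ m / t ^ m) + 2 ^ ((n:ℝ) + 1) with hCdef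
  have hfr : ((finrank ℝ (EuclideanSpace ℝ (Fin n))) : ℝ) < (n:ℝ) + 1 := by
    rw [finrank_euclideanSpace_fin]; linarith
  refine ((integrable_one_add_norm (μ := volume) hfr).const_mul C).mono' ?_ ?_
  · apply Measurable.aestronglyMeasurable
    exact (((measurable_norm.pow_const p).const_mul t).neg).exp
  · filter_upwards with x
    set r : ℝ := ‖x‖ with hrdef
    have hr : 0 ≤ r := norm_nonneg x
    have h1r : (0:ℝ) < 1 + r := by linarith
    rw [Real.norm_eq_abs, abs_of_pos (Real.exp_pos _)]
    rw [Real.rpow_neg h1r.le, ← div_eq_mul_inv]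
    rw [le_div_iff₀ (Real.rpow_pos_of_pos h1r _)]
    rcases le_total r 1 with hr1 | hr1
    · have hb1 : (1 + r) ^ ((n:ℝ)+1) ≤ 2 ^ ((n:ℝ)+1) :=
        Real.rpow_le_rpow h1r.le (by linarith) (by positivity)
      have he1 : Real.exp (-(t * r ^ p)) ≤ 1 := by
        rw [Real.exp_le_one_iff]
        have : 0 ≤ t * r ^ p := by positivity
        linarith
      calc Real.exp (-(t * r ^ p)) * (1 + r) ^ ((n:ℝ)+1)
          ≤ 1 * (2 ^ ((n:ℝ)+1)) := by
            apply mul_le_mul he1 hb1 (by positivity) (by norm_num)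
        _ ≤ C := by
            rw [hCdef, one_mul]
            have : (0:ℝ) ≤ 2 ^ ((n:ℝ) + 1) * ((m:ℝ) ^ m / t ^ m) := by positivity
            linarith
    · have hrpos : (0:ℝ) < r := lt_of_lt_of_le one_pos hr1
      have hu : (0:ℝ) < t * r ^ p := by positivity
      have hexp : Real.exp (-(t * r ^ p)) ≤ (m:ℝ) ^ m / (t * r ^ p) ^ m := by
        have hkey := pow_le_exp_aux hu.le hm0
        rw [Real.exp_neg, inv_eq_one_div, div_le_div_iff₀ (Real.exp_pos _) (by positivity)]
        linarith
      have hb : (1 + r) ^ ((n:ℝ)+1) ≤ 2 ^ ((n:ℝ)+1) * r ^ ((n:ℝ)+1) := by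
        rw [← Real.mul_rpow (by norm_num) hr]
        exact Real.rpow_le_rpow h1r.le (by linarith) (by positivity)
      have h3 : (t * r ^ p) ^ m = t ^ m * r ^ (p * (m:ℝ)) := by
        rw [mul_pow, ← Real.rpow_natCast (r ^ p) m, ← Real.rpow_mul hr]
      calc Real.exp (-(t * r ^ p)) * (1 + r) ^ ((n:ℝ)+1)
          ≤ ((m:ℝ) ^ m / (t * r ^ p) ^ m) * (2 ^ ((n:ℝ)+1) * r ^ ((n:ℝ)+1)) := by
            apply mul_le_mul hexp hb (by positivity)
            positivity
        _ = 2 ^ ((n:ℝ)+1) * ((m:ℝ) ^ m / t ^ m) * r ^ (((n:ℝ)+1) - p * (m:ℝ)) := by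
            rw [h3, Real.rpow_sub hrpos]
            field_simp
        _ ≤ 2 ^ ((n:ℝ)+1) * ((m:ℝ) ^ m / t ^ m) * 1 := by
            apply mul_le_mul_of_nonneg_left
              (Real.rpow_le_one_of_one_le_of_nonpos hr1 (by linarith)) (by positivity)
        _ ≤ C := by
            rw [hCdef, mul_one]
            have : (0:ℝ) < 2 ^ ((n:ℝ) + 1) := by positivity
            linarith

lemma integral_norm_rpow_mul_exp (n : ℕ) (hn : 1 ≤ n) {p t : ℝ} (hp : 0 < p) (ht : 0 < t)
    {q : ℝ} (hq : 0 ≤ q) :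
    ∫ x : EuclideanSpace ℝ (Fin n), ‖x‖ ^ q * Real.exp (-(t * ‖x‖ ^ p)) =
      (n : ℝ) * (volume (Metric.ball (0:EuclideanSpace ℝ (Fin n)) 1)).toReal *
        (t ^ (-(((n:ℝ) + q)) / p) * (1 / p) * Real.Gamma (((n:ℝ) + q) / p)) := by
  haveI : Nontrivial (EuclideanSpace ℝ (Fin n)) := by
    apply Module.nontrivial_of_finrank_pos (R := ℝ)
    rw [finrank_euclideanSpace_fin]
    exact hn
  have h := MeasureTheory.integral_fun_norm_addHaar (volume : Measure (EuclideanSpace ℝ (Fin n)))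
    (fun y : ℝ => y ^ q * Real.exp (-(t * y ^ p)))
  rw [finrank_euclideanSpace_fin] at h
  rw [h]
  have hin : ∫ y in Ioi (0:ℝ), y ^ (n - 1) • (y ^ q * Real.exp (-(t * y ^ p))) =
      t ^ (-(((n:ℝ) + q)) / p) * (1 / p) * Real.Gamma (((n:ℝ) + q) / p) := by
    rw [setIntegral_congr_fun measurableSet_Ioi
      (g := fun y : ℝ => y ^ (((n:ℝ) - 1) + q) * Real.exp (-t * y ^ p)) ?_]
    · rw [integral_rpow_mul_exp_neg_mul_rpow hp (by
        have : (1:ℝ) ≤ (n:ℝ) := by exact_mod_cast hn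
        linarith) ht]
      have : ((n:ℝ) - 1 + q + 1) = (n:ℝ) + q := by ring
      rw [this]
    · intro y hy
      have hy' : (0:ℝ) < y := hy
      simp only [smul_eq_mul]
      rw [← mul_assoc, neg_mul]
      congr 1
      rw [← Real.rpow_natCast y (n-1), ← Real.rpow_add hy']
      congr 2
      rw [Nat.cast_sub hn, Nat.cast_one]
  rw [hin, nsmul_eq_mul, smul_eq_mul]
  rw [measureReal_def]
  ring

/-- `D_{n,p,1} = (n/(p e)) ((1/n) Γ(1+n/p))^(-p/n)`. -/
noncomputable def Dnp1 (n : ℕ) (p : ℝ) : ℝ :=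
  ((n : ℝ) / (p * Real.exp 1)) *
    ((1 / (n : ℝ)) * Real.Gamma (1 + n / p)) ^ (-(p / (n : ℝ)))

set_option maxHeartbeats 1600000 in
/-- Carlson–Levin inequality, case `λ = 1`: for a probability density `f` on `ℝⁿ` with
finite `p`-th moment and finite entropy,
`∫ |x|^p f(x) dx ≥ (D_{n,p,1}/(n ω_n)^(p/n)) exp(-(p/n) ∫ f log f)`,
with equality iff `f(x) = a e^{-|b x|^p}` a.e. for some `a, b > 0`. -/
theorem carlson_levin_eq_one (n : ℕ) (hn : 1 ≤ n) (p : ℝ) (hp : 0 < p)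
    (f : EuclideanSpace ℝ (Fin n) → ℝ)
    (hf_nonneg : ∀ x, 0 ≤ f x) (hf_int : Integrable f volume)
    (hf_one : ∫ x, f x = 1)
    (hmom : Integrable (fun x : EuclideanSpace ℝ (Fin n) => ‖x‖ ^ p * f x) volume)
    (hent : Integrable (fun x => f x * Real.log (f x)) volume) :
    ((∫ x : EuclideanSpace ℝ (Fin n), ‖x‖ ^ p * f x)
        ≥ (Dnp1 n p
            / ((n : ℝ) * (volume (Metric.ball (0:EuclideanSpace ℝ (Fin n)) 1)).toReal)
                ^ (p / (n : ℝ)))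
          * Real.exp (-(p / (n : ℝ)) * ∫ x, f x * Real.log (f x))) ∧
    (((∫ x : EuclideanSpace ℝ (Fin n), ‖x‖ ^ p * f x)
        = (Dnp1 n p
            / ((n : ℝ) * (volume (Metric.ball (0:EuclideanSpace ℝ (Fin n)) 1)).toReal)
                ^ (p / (n : ℝ)))
          * Real.exp (-(p / (n : ℝ)) * ∫ x, f x * Real.log (f x)))
      ↔ ∃ a b : ℝ, 0 < a ∧ 0 < b ∧
          f =ᵐ[volume] fun x => a * Real.exp (-(b * ‖x‖) ^ p)) := by
  haveI hNT : Nontrivial (EuclideanSpace ℝ (Fin n)) := by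
    apply Module.nontrivial_of_finrank_pos (R := ℝ)
    rw [finrank_euclideanSpace_fin]
    exact hn
  set ω : ℝ := (volume (Metric.ball (0:EuclideanSpace ℝ (Fin n)) 1)).toReal with hω
  have hωpos : 0 < ω := by
    rw [hω]
    exact ENNReal.toReal_pos (Metric.measure_ball_pos volume 0 one_pos).ne' measure_ball_lt_top.ne
  have hnR : (0:ℝ) < n := by exact_mod_cast hn
  set M : ℝ := ∫ x : EuclideanSpace ℝ (Fin n), ‖x‖ ^ p * f x with hMdef
  set Ent : ℝ := ∫ x, f x * Real.log (f x) with hEntdef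
  have hM0 : 0 ≤ M :=
    integral_nonneg fun x => mul_nonneg (Real.rpow_nonneg (norm_nonneg x) p) (hf_nonneg x)
  have hM : 0 < M := by
    rcases hM0.lt_or_eq with h | h
    · exact h
    · exfalso
      have hzero : (fun x : EuclideanSpace ℝ (Fin n) => ‖x‖ ^ p * f x) =ᵐ[volume] 0 :=
        (integral_eq_zero_iff_of_nonneg
          (fun x => mul_nonneg (Real.rpow_nonneg (norm_nonneg x) p) (hf_nonneg x)) hmom).mp h.symm
      have h0 : ∀ᵐ x : EuclideanSpace ℝ (Fin n) ∂volume, x ≠ 0 := by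
        rw [ae_iff]
        simp only [not_not]
        rw [show {x : EuclideanSpace ℝ (Fin n) | x = 0} = {0} from Set.setOf_eq_eq_singleton]
        exact measure_singleton 0
      have hf0 : f =ᵐ[volume] 0 := by
        filter_upwards [hzero, h0] with x hx hx0
        simp only [Pi.zero_apply] at hx ⊢
        have hnx : ‖x‖ ^ p ≠ 0 := by
          have : 0 < ‖x‖ := norm_pos_iff.mpr hx0
          positivity
        rcases mul_eq_zero.mp hx with h' | h'
        · exact absurd h' hnx
        · exact h'
      rw [integral_congr_ae hf0] at hf_one
      simp at hf_one
  set t : ℝ := (n:ℝ) / (p * M) with htdef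
  have ht : 0 < t := by positivity
  have hΓ : 0 < Real.Gamma ((n:ℝ)/p) := Real.Gamma_pos_of_pos (by positivity)
  set Ifun : ℝ → ℝ := fun s => (n:ℝ) * ω * (s ^ (-(n:ℝ)/p) * (1/p) * Real.Gamma ((n:ℝ)/p))
    with hIfundef
  have hIval : ∀ s : ℝ, 0 < s →
      (∫ x : EuclideanSpace ℝ (Fin n), Real.exp (-(s * ‖x‖ ^ p))) = Ifun s := by
    intro s hs
    have h := integral_norm_rpow_mul_exp n hn hp hs (q := 0) le_rfl
    simp only [Real.rpow_zero, one_mul, add_zero] at h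
    rw [h, hIfundef, hω]
  have hIpos : ∀ s : ℝ, 0 < s → 0 < Ifun s := by
    intro s hs
    rw [hIfundef]
    positivity
  have hMomval : ∀ s : ℝ, 0 < s →
      (∫ x : EuclideanSpace ℝ (Fin n), ‖x‖ ^ p * Real.exp (-(s * ‖x‖ ^ p)))
        = ((n:ℝ)/(p*s)) * Ifun s := by
    intro s hs
    rw [integral_norm_rpow_mul_exp n hn hp hs hp.le, hIfundef, hω]
    rw [show ((n:ℝ)+p)/p = (n:ℝ)/p + 1 by field_simp]
    rw [Real.Gamma_add_one (by positivity : (0:ℝ) < (n:ℝ)/p).ne']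
    rw [show (-((n:ℝ)+p)/p) = (-(n:ℝ)/p) + (-1) by field_simp; ring]
    rw [Real.rpow_add hs, Real.rpow_neg_one]
    field_simp
  set I : ℝ := Ifun t with hIdef
  have hIt : 0 < I := hIpos t ht
  set g : EuclideanSpace ℝ (Fin n) → ℝ := fun x => Real.exp (-(t * ‖x‖ ^ p)) / I with hgdef
  have hg_pos : ∀ x, 0 < g x := fun x => div_pos (Real.exp_pos _) hIt
  have hg_int : Integrable g volume := (integrable_exp_neg_mul_rpow_norm n hn hp ht).div_const I
  have hg_one : ∫ x, g x = 1 := by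
    rw [hgdef]
    rw [integral_div, hIval t ht]
    exact div_self hIt.ne'
  have hlog_g : ∀ x : EuclideanSpace ℝ (Fin n),
      Real.log (g x) = -(t * ‖x‖ ^ p) - Real.log I := by
    intro x
    rw [hgdef]
    simp only
    rw [Real.log_div (Real.exp_ne_zero _) hIt.ne', Real.log_exp]
  set φ : EuclideanSpace ℝ (Fin n) → ℝ :=
    fun x => f x * Real.log (f x) - f x * Real.log (g x) - f x + g x with hφdef
  have hφ_eq : φ = fun x =>
      (((f x * Real.log (f x) + t * (‖x‖ ^ p * f x)) + Real.log I * f x) - f x) + g x := by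
    funext x
    rw [hφdef]
    simp only
    rw [hlog_g x]
    ring
  have hint1 : Integrable (fun x : EuclideanSpace ℝ (Fin n) =>
      f x * Real.log (f x) + t * (‖x‖ ^ p * f x)) volume := hent.add (hmom.const_mul t)
  have hint2 : Integrable (fun x : EuclideanSpace ℝ (Fin n) =>
      (f x * Real.log (f x) + t * (‖x‖ ^ p * f x)) + Real.log I * f x) volume :=
    hint1.add (hf_int.const_mul (Real.log I))
  have hint3 : Integrable (fun x : EuclideanSpace ℝ (Fin n) =>
      ((f x * Real.log (f x) + t * (‖x‖ ^ p * f x)) + Real.log I * f x) - f x) volume :=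
    hint2.sub hf_int
  have hφ_int : Integrable φ volume := by
    rw [hφ_eq]
    exact hint3.add hg_int
  have hφ_nonneg : ∀ x, 0 ≤ φ x := fun x => (gibbs_pt (hf_nonneg x) (hg_pos x)).1
  have hφ_integral : ∫ x, φ x = Ent + t * M + Real.log I := by
    rw [hφ_eq]
    rw [integral_add hint3 hg_int, integral_sub hint2 hf_int, integral_add hint1
        (hf_int.const_mul (Real.log I)), integral_add hent (hmom.const_mul t),
      integral_const_mul, integral_const_mul, hf_one, hg_one, ← hMdef, ← hEntdef]
    ring
  set F : ℝ := Ent + t * M + Real.log I with hFdef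
  have hF0 : 0 ≤ F := by
    rw [← hφ_integral]
    exact integral_nonneg hφ_nonneg
  have htM : t * M = (n:ℝ)/p := by
    rw [htdef]
    field_simp
  have hpn1 : p/(n:ℝ) * ((n:ℝ)/p) = 1 := by field_simp
  have hsplit : Real.exp (-(p/(n:ℝ)) * F)
      = Real.exp (-(p/(n:ℝ)) * Ent) * (Real.exp 1)⁻¹ * I ^ (-(p/(n:ℝ))) := by
    have h1 : -(p/(n:ℝ)) * F = -(p/(n:ℝ)) * Ent + (-1) + Real.log I * (-(p/(n:ℝ))) := by
      rw [hFdef, htM]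
      have : p/(n:ℝ) * ((n:ℝ)/p) = 1 := hpn1
      nlinarith [this]
    rw [h1, Real.exp_add, Real.exp_add, Real.exp_neg, Real.rpow_def_of_pos hIt]
  set C0 : ℝ := (n:ℝ) * ω * ((1/p) * Real.Gamma ((n:ℝ)/p)) with hC0def
  have hC0 : 0 < C0 := by rw [hC0def]; positivity
  clear_value ω M Ent t I F C0
  have hIrpow : I ^ (-(p/(n:ℝ))) = C0 ^ (-(p/(n:ℝ))) * t := by
    have hIeq : I = C0 * t ^ (-(n:ℝ)/p) := by
      rw [hIdef, hIfundef, hC0def]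
      ring
    rw [hIeq, Real.mul_rpow hC0.le (Real.rpow_nonneg ht.le _), ← Real.rpow_mul ht.le,
      show (-(n:ℝ)/p) * (-(p/(n:ℝ))) = 1 by field_simp, Real.rpow_one]
  have hDnp : Dnp1 n p / ((n:ℝ) * ω) ^ (p/(n:ℝ))
      = ((n:ℝ)/p) * (Real.exp 1)⁻¹ * C0 ^ (-(p/(n:ℝ))) := by
    have hG1 : (1/(n:ℝ)) * Real.Gamma (1 + (n:ℝ)/p) = (1/p) * Real.Gamma ((n:ℝ)/p) := by
      rw [add_comm, Real.Gamma_add_one (by positivity : (0:ℝ) < (n:ℝ)/p).ne']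
      field_simp
    have h2 : ((n:ℝ)*ω) ^ (p/(n:ℝ)) = (((n:ℝ)*ω) ^ (-(p/(n:ℝ))))⁻¹ := by
      rw [Real.rpow_neg (by positivity), inv_inv]
    have h3 : C0 ^ (-(p/(n:ℝ))) = ((n:ℝ)*ω) ^ (-(p/(n:ℝ)))
        * ((1/p) * Real.Gamma ((n:ℝ)/p)) ^ (-(p/(n:ℝ))) := by
      rw [hC0def, Real.mul_rpow (by positivity) (by positivity)]
    rw [Dnp1.eq_def, hG1, div_eq_mul_inv, ← Real.rpow_neg (by positivity :
      (0:ℝ) ≤ (n:ℝ)*ω), h3]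
    field_simp [Real.exp_ne_zero]
  have hkey : Dnp1 n p / ((n:ℝ)*ω) ^ (p/(n:ℝ)) * Real.exp (-(p/(n:ℝ)) * Ent)
      = M * Real.exp (-(p/(n:ℝ)) * F) := by
    rw [hsplit, hIrpow, hDnp]
    have hMt : M * t = (n:ℝ)/p := by rw [mul_comm]; exact htM
    linear_combination (-(Real.exp (-(p/(n:ℝ)) * Ent) * (Real.exp 1)⁻¹
      * C0 ^ (-(p/(n:ℝ))))) * hMt
  constructor
  · rw [ge_iff_le, hkey]
    have h1 : Real.exp (-(p/(n:ℝ)) * F) ≤ 1 := by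
      calc Real.exp (-(p/(n:ℝ)) * F) ≤ Real.exp 0 := by
            apply Real.exp_le_exp.mpr
            have h2 : 0 ≤ p/(n:ℝ) * F := mul_nonneg (by positivity) hF0
            nlinarith
        _ = 1 := Real.exp_zero
    exact mul_le_of_le_one_right hM.le h1
  · rw [hkey]
    have hiff1 : M = M * Real.exp (-(p/(n:ℝ)) * F) ↔ F = 0 := by
      constructor
      · intro h
        have h2 : (1:ℝ) = Real.exp (-(p/(n:ℝ)) * F) :=
          mul_left_cancel₀ hM.ne' ((mul_one M).trans h)
        have h4 : -(p/(n:ℝ)) * F = 0 := Real.exp_eq_exp.mp (h2.symm.trans Real.exp_zero.symm)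
        rcases mul_eq_zero.mp h4 with h5 | h5
        · exfalso
          rw [neg_eq_zero] at h5
          have : p/(n:ℝ) ≠ 0 := by positivity
          exact this h5
        · exact h5
      · intro h
        rw [h]
        simp
    rw [hiff1]
    constructor
    · intro hFzero
      have hphi0 : φ =ᵐ[volume] 0 :=
        (integral_eq_zero_iff_of_nonneg hφ_nonneg hφ_int).mp (by rw [hφ_integral]; exact hFzero)
      refine ⟨I⁻¹, t ^ (1/p), inv_pos.mpr hIt, Real.rpow_pos_of_pos ht _, ?_⟩
      have hfg : f =ᵐ[volume] g := by
        filter_upwards [hphi0] with x hx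
        have hx' : f x * Real.log (f x) - f x * Real.log (g x) - f x + g x = 0 := hx
        exact (gibbs_pt (hf_nonneg x) (hg_pos x)).2.mp hx'
      have hgfun : g = fun x : EuclideanSpace ℝ (Fin n) =>
          I⁻¹ * Real.exp (-(t ^ (1/p) * ‖x‖) ^ p) := by
        funext x
        rw [hgdef]
        simp only
        have hbx : (t ^ ((1:ℝ)/p) * ‖x‖) ^ p = t * ‖x‖ ^ p := by
          rw [Real.mul_rpow (Real.rpow_nonneg ht.le _) (norm_nonneg x), ← Real.rpow_mul ht.le,
            show ((1:ℝ)/p) * p = 1 by field_simp, Real.rpow_one]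
        rw [hbx, div_eq_mul_inv, mul_comm]
      exact hgfun ▸ hfg
    · rintro ⟨a, b, ha, hb, hfab⟩
      have hs : 0 < b ^ p := Real.rpow_pos_of_pos hb p
      set s : ℝ := b ^ p with hsdef
      have hfs : f =ᵐ[volume] fun x : EuclideanSpace ℝ (Fin n) =>
          a * Real.exp (-(s * ‖x‖ ^ p)) := by
        have heq : (fun x : EuclideanSpace ℝ (Fin n) => a * Real.exp (-(b * ‖x‖) ^ p))
            = fun x : EuclideanSpace ℝ (Fin n) => a * Real.exp (-(s * ‖x‖ ^ p)) := by
          funext x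
          rw [Real.mul_rpow hb.le (norm_nonneg x)]
        exact heq ▸ hfab
      have h1 : a * Ifun s = 1 := by
        rw [← hIval s hs]
        calc a * ∫ x : EuclideanSpace ℝ (Fin n), Real.exp (-(s * ‖x‖ ^ p))
            = ∫ x : EuclideanSpace ℝ (Fin n), a * Real.exp (-(s * ‖x‖ ^ p)) :=
              (integral_const_mul a _).symm
          _ = ∫ x : EuclideanSpace ℝ (Fin n), f x := (integral_congr_ae hfs).symm
          _ = 1 := hf_one
      have hMs : M = ((n:ℝ)/(p*s)) * (a * Ifun s) := by
        rw [hMdef]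
        calc ∫ x : EuclideanSpace ℝ (Fin n), ‖x‖ ^ p * f x
            = ∫ x : EuclideanSpace ℝ (Fin n), a * (‖x‖ ^ p * Real.exp (-(s * ‖x‖ ^ p))) :=
              integral_congr_ae (hfs.mono fun x hx => by
                show ‖x‖ ^ p * f x = a * (‖x‖ ^ p * Real.exp (-(s * ‖x‖ ^ p)))
                rw [hx]; ring)
          _ = a * ∫ x : EuclideanSpace ℝ (Fin n), ‖x‖ ^ p * Real.exp (-(s * ‖x‖ ^ p)) :=
              integral_const_mul a _
          _ = a * (((n:ℝ)/(p*s)) * Ifun s) := by rw [hMomval s hs]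
          _ = ((n:ℝ)/(p*s)) * (a * Ifun s) := by ring
      have hMval : M = (n:ℝ)/(p*s) := by rw [hMs, h1, mul_one]
      have hst : s = t := by
        rw [htdef, hMval]
        field_simp
      have ha' : a = I⁻¹ := by
        have h2 : a * I = 1 := by rw [hIdef, ← hst]; exact h1
        exact eq_inv_of_mul_eq_one_left h2
      have hfg : f =ᵐ[volume] g := by
        have heq2 : (fun x : EuclideanSpace ℝ (Fin n) => a * Real.exp (-(s * ‖x‖ ^ p))) = g := by
          funext x
          rw [hgdef]
          simp only
          rw [ha', hst, div_eq_mul_inv, mul_comm]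
        exact heq2 ▸ hfs
      have hphi0 : φ =ᵐ[volume] (0 : EuclideanSpace ℝ (Fin n) → ℝ) := by
        filter_upwards [hfg] with x hx
        show f x * Real.log (f x) - f x * Real.log (g x) - f x + g x = 0
        rw [hx]
        ring
      rw [← hφ_integral, integral_congr_ae hphi0]
      simp
end

section
/- Fix d ≥ 1 and p ≥ 1. Let K and L be star-shaped subsets of R^d with radial functions ρ_K ∈ L^{d+p}(S^{d-1}) and ρ_L^{-1} ∈ L^{p}(S^{d-1}), ρ_L > 0 a.e. Define the dual mixed volume Ṽ_{-p,d}(K,L) = (1/d) ∫_{S^{d-1}} ρ_K(θ)^{d+p} ρ_L(θ)^{-p} dθ and vol_d via (1/d)∫ ρ^d. Then Ṽ_{-p,d}(K,L)^d ≥ vol_d(K)^{d+p} vol_d(L)^{-p}, with equality if and only if ρ_K = c ρ_L a.e. on S^{d-1} for some c > 0. -/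
open MeasureTheory

section Aux

lemma geom_strict {θ s t : ℝ} (hθ : 0 < θ) (hθ1 : θ < 1) (hs : 0 ≤ s) (ht : 0 ≤ t)
    (hst : s ≠ t) : s ^ θ * t ^ (1 - θ) < θ * s + (1 - θ) * t := by
  rcases eq_or_lt_of_le hs with rfl | hs
  · have ht' : 0 < t := lt_of_le_of_ne ht (fun h => hst h)
    rw [Real.zero_rpow hθ.ne']
    nlinarith
  rcases eq_or_lt_of_le ht with rfl | ht'
  · have h1θ : (1:ℝ) - θ ≠ 0 := by intro h; linarith
    rw [Real.zero_rpow h1θ]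
    nlinarith
  · have key := strictConcaveOn_log_Ioi.2 (Set.mem_Ioi.2 hs) (Set.mem_Ioi.2 ht') hst hθ
      (by linarith : (0:ℝ) < 1 - θ) (by ring)
    simp only [smul_eq_mul] at key
    rw [← Real.log_rpow hs θ, ← Real.log_rpow ht' (1 - θ),
      ← Real.log_mul (Real.rpow_pos_of_pos hs θ).ne' (Real.rpow_pos_of_pos ht' (1 - θ)).ne']
      at key
    exact (Real.log_lt_log_iff (by positivity) (add_pos (mul_pos hθ hs) (mul_pos (by linarith : (0:ℝ) < 1 - θ) ht'))).1 key

lemma young_pair {q q' : ℝ} (hq : 1 < q) (hq' : 1 < q') (hqq : 1/q + 1/q' = 1)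
    {x y : ℝ} (hx : 0 ≤ x) (hy : 0 ≤ y) :
    x * y ≤ x ^ q / q + y ^ q' / q' ∧
      (x * y = x ^ q / q + y ^ q' / q' ↔ x ^ q = y ^ q') := by
  have hq0 : (0:ℝ) < q := by linarith
  have hq'0 : (0:ℝ) < q' := by linarith
  have hθ : (0:ℝ) < 1/q := by positivity
  have hθ1 : 1/q < 1 := by rw [div_lt_one hq0]; exact hq
  have h1θ : 1 - 1/q = 1/q' := by linarith
  have hxq : (x ^ q) ^ (1/q) = x := by
    rw [← Real.rpow_mul hx, mul_one_div, div_self hq0.ne', Real.rpow_one]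
  have hyq : (y ^ q') ^ (1/q') = y := by
    rw [← Real.rpow_mul hy, mul_one_div, div_self hq'0.ne', Real.rpow_one]
  have hstrict : x ^ q ≠ y ^ q' → x * y < x ^ q / q + y ^ q' / q' := by
    intro hne
    have h := geom_strict hθ hθ1 (Real.rpow_nonneg hx q) (Real.rpow_nonneg hy q') hne
    rw [h1θ, hxq, hyq] at h
    calc x * y < 1/q * x ^ q + 1/q' * y ^ q' := h
      _ = x ^ q / q + y ^ q' / q' := by ring
  have heqcase : x ^ q = y ^ q' → x * y = x ^ q / q + y ^ q' / q' := by
    intro he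
    calc x * y = (x ^ q) ^ (1/q) * (y ^ q') ^ (1/q') := by rw [hxq, hyq]
      _ = (x ^ q) ^ (1/q) * (x ^ q) ^ (1/q') := by rw [he]
      _ = (x ^ q) ^ (1/q + 1/q') :=
          (Real.rpow_add' (Real.rpow_nonneg hx q) (by rw [hqq]; norm_num)).symm
      _ = x ^ q := by rw [hqq, Real.rpow_one]
      _ = x ^ q * (1/q + 1/q') := by rw [hqq, mul_one]
      _ = x ^ q / q + y ^ q' / q' := by rw [← he]; ring
  refine ⟨?_, ⟨fun heq => by_contra fun hne => absurd heq (ne_of_lt (hstrict hne)), heqcase⟩⟩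
  rcases eq_or_ne (x ^ q) (y ^ q') with he | hne
  · exact le_of_eq (heqcase he)
  · exact le_of_lt (hstrict hne)

lemma holder_core {X : Type*} [MeasurableSpace X] (μ : Measure X) {q q' : ℝ}
    (hq : 1 < q) (hq' : 1 < q') (hqq : 1/q + 1/q' = 1)
    {U V : X → ℝ} (hUm : AEMeasurable U μ) (hVm : AEMeasurable V μ)
    (hU0 : 0 ≤ᵐ[μ] U) (hV0 : 0 ≤ᵐ[μ] V)
    (hUq : Integrable (fun x => U x ^ q) μ) (hVq : Integrable (fun x => V x ^ q') μ)
    (hA : 0 < ∫ x, U x ^ q ∂μ) (hC : 0 < ∫ x, V x ^ q' ∂μ) :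
    (∫ x, U x * V x ∂μ) ≤ (∫ x, U x ^ q ∂μ) ^ (1/q) * (∫ x, V x ^ q' ∂μ) ^ (1/q') ∧
    ((∫ x, U x * V x ∂μ) = (∫ x, U x ^ q ∂μ) ^ (1/q) * (∫ x, V x ^ q' ∂μ) ^ (1/q') ↔
      (fun x => (∫ x, V x ^ q' ∂μ) * U x ^ q) =ᵐ[μ]
        (fun x => (∫ x, U x ^ q ∂μ) * V x ^ q')) := by
  have hq0 : (0:ℝ) < q := by linarith
  have hq'0 : (0:ℝ) < q' := by linarith
  set A := ∫ x, U x ^ q ∂μ with hAdef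
  set C := ∫ x, V x ^ q' ∂μ with hCdef
  set a := A ^ (1/q) with hadef
  set c := C ^ (1/q') with hcdef
  have ha : 0 < a := Real.rpow_pos_of_pos hA _
  have hc : 0 < c := Real.rpow_pos_of_pos hC _
  have haq : a ^ q = A := by
    rw [hadef, ← Real.rpow_mul hA.le, one_div, inv_mul_cancel₀ hq0.ne', Real.rpow_one]
  have hcq : c ^ q' = C := by
    rw [hcdef, ← Real.rpow_mul hC.le, one_div, inv_mul_cancel₀ hq'0.ne', Real.rpow_one]
  set h : X → ℝ := fun x =>
    a * c / (q * A) * U x ^ q + a * c / (q' * C) * V x ^ q' - U x * V x with hhdef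
  have h0 : ∀ᵐ x ∂μ, 0 ≤ h x ∧ (h x = 0 ↔ C * U x ^ q = A * V x ^ q') := by
    filter_upwards [hU0, hV0] with x hU hV
    have hy := young_pair hq hq' hqq (div_nonneg hU ha.le) (div_nonneg hV hc.le)
    have e1 : (U x / a) ^ q = U x ^ q / A := by
      rw [Real.div_rpow hU ha.le, haq]
    have e2 : (V x / c) ^ q' = V x ^ q' / C := by
      rw [Real.div_rpow hV hc.le, hcq]
    rw [e1, e2] at hy
    have hUV : a * c * (U x / a * (V x / c)) = U x * V x := by
      field_simp
    have hring : a * c * (U x ^ q / A / q + V x ^ q' / C / q')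
        = a * c / (q * A) * U x ^ q + a * c / (q' * C) * V x ^ q' := by ring
    constructor
    · have hineq := mul_le_mul_of_nonneg_left hy.1 (mul_pos ha hc).le
      rw [hUV, hring] at hineq
      simp only [hhdef]
      linarith
    · constructor
      · intro hz
        simp only [hhdef] at hz
        have e : U x / a * (V x / c) = U x ^ q / A / q + V x ^ q' / C / q' := by
          apply mul_left_cancel₀ (mul_pos ha hc).ne'
          rw [hUV, hring]
          linarith
        have hprop := hy.2.1 e
        rw [div_eq_div_iff hA.ne' hC.ne'] at hprop
        linarith
      · intro hts
        have hprop : U x ^ q / A = V x ^ q' / C := by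
          rw [div_eq_div_iff hA.ne' hC.ne']
          linarith
        have e := hy.2.2 hprop
        have := congrArg (fun t => a * c * t) e
        rw [hUV, hring] at this
        simp only [hhdef]
        linarith
  have hUVm : AEStronglyMeasurable (fun x => U x * V x) μ :=
    (hUm.mul hVm).aestronglyMeasurable
  have hbound : Integrable
      (fun x => a * c / (q * A) * U x ^ q + a * c / (q' * C) * V x ^ q') μ :=
    (hUq.const_mul _).add (hVq.const_mul _)
  have hUVint : Integrable (fun x => U x * V x) μ := by
    refine hbound.mono' hUVm ?_
    filter_upwards [h0, hU0, hV0] with x hx hU hV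
    rw [Real.norm_eq_abs, abs_of_nonneg (mul_nonneg hU hV)]
    have := hx.1
    simp only [hhdef] at this
    linarith
  have hhint : Integrable h μ := by
    simp only [hhdef]
    exact hbound.sub hUVint
  have hsum : q + q' = q * q' := by
    field_simp at hqq
    linarith
  have hIh : ∫ x, h x ∂μ = a * c - ∫ x, U x * V x ∂μ := by
    simp only [hhdef]
    rw [integral_sub hbound hUVint,
      integral_add (hUq.const_mul _) (hVq.const_mul _),
      integral_const_mul, integral_const_mul, ← hAdef, ← hCdef]
    have e1 : a * c / (q * A) * A = a * c * (1/q) := by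
      field_simp [hA.ne', hq0.ne']
    have e2 : a * c / (q' * C) * C = a * c * (1/q') := by
      field_simp [hC.ne', hq'0.ne']
    rw [e1, e2, ← mul_add, hqq, mul_one]
  constructor
  · have := integral_nonneg_of_ae (h0.mono fun x hx => hx.1)
    rw [hIh] at this
    linarith
  · rw [show A ^ (1/q) * C ^ (1/q') = a * c from rfl]
    constructor
    · intro heq
      have hz : ∫ x, h x ∂μ = 0 := by rw [hIh, heq]; ring
      have := (integral_eq_zero_iff_of_nonneg_ae (h0.mono fun x hx => hx.1) hhint).1 hz
      filter_upwards [this, h0] with x hx hx0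
      exact hx0.2.1 hx
    · intro heq
      have hz : h =ᵐ[μ] 0 := by
        filter_upwards [heq, h0] with x hx hx0
        exact hx0.2.2 hx
      have : ∫ x, h x ∂μ = 0 := by
        rw [integral_congr_ae hz]
        simp
      rw [hIh] at this
      linarith

end Aux

/-- Dual Minkowski first inequality: for `d ≥ 1`, `p ≥ 1`, and radial functions
`ρ_K ∈ L^{d+p}(S^{d-1})`, `ρ_L` positive a.e. with `ρ_L⁻¹ ∈ L^p(S^{d-1})`, set
`Ṽ_{-p,d}(K,L) = (1/d) ∫ ρ_K^{d+p} ρ_L^{-p}` and `vol_d = (1/d) ∫ ρ^d`. Then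
`Ṽ_{-p,d}(K,L)^d ≥ vol_d(K)^{d+p} vol_d(L)^{-p}`, with equality iff `ρ_K = c ρ_L`
a.e. for some `c > 0`. -/
theorem dual_minkowski_first (d : ℕ) (hd : 1 ≤ d) (p : ℝ) (hp : 1 ≤ p)
    (ρK ρL : EuclideanSpace ℝ (Fin d) → ℝ)
    (hρK_nonneg : ∀ u, 0 ≤ ρK u) (hρK_meas : Measurable ρK) (hρL_meas : Measurable ρL)
    (hρL_pos : ∀ᵐ u ∂(μH[(d:ℝ)-1]).restrict (Metric.sphere (0:EuclideanSpace ℝ (Fin d)) 1),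
      0 < ρL u)
    (hK_int : IntegrableOn (fun u => ρK u ^ ((d : ℝ) + p))
      (Metric.sphere (0:EuclideanSpace ℝ (Fin d)) 1) (μH[(d:ℝ)-1]))
    (hL_int : IntegrableOn (fun u => ρL u ^ (d : ℝ))
      (Metric.sphere (0:EuclideanSpace ℝ (Fin d)) 1) (μH[(d:ℝ)-1]))
    (hmix_int : IntegrableOn (fun u => ρK u ^ ((d : ℝ) + p) * ρL u ^ (-p))
      (Metric.sphere (0:EuclideanSpace ℝ (Fin d)) 1) (μH[(d:ℝ)-1]))
    (hvolK_pos : 0 < (1 / (d : ℝ)) * ∫ u in Metric.sphere (0:EuclideanSpace ℝ (Fin d)) 1,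
      ρK u ^ (d : ℝ) ∂(μH[(d:ℝ)-1]))
    (hvolL_pos : 0 < (1 / (d : ℝ)) * ∫ u in Metric.sphere (0:EuclideanSpace ℝ (Fin d)) 1,
      ρL u ^ (d : ℝ) ∂(μH[(d:ℝ)-1])) :
    (((1 / (d : ℝ)) * ∫ u in Metric.sphere (0:EuclideanSpace ℝ (Fin d)) 1,
          ρK u ^ ((d : ℝ) + p) * ρL u ^ (-p) ∂(μH[(d:ℝ)-1])) ^ (d : ℝ)
        ≥ ((1 / (d : ℝ)) * ∫ u in Metric.sphere (0:EuclideanSpace ℝ (Fin d)) 1,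
              ρK u ^ (d : ℝ) ∂(μH[(d:ℝ)-1])) ^ ((d : ℝ) + p)
          * ((1 / (d : ℝ)) * ∫ u in Metric.sphere (0:EuclideanSpace ℝ (Fin d)) 1,
              ρL u ^ (d : ℝ) ∂(μH[(d:ℝ)-1])) ^ (-p)) ∧
    ((((1 / (d : ℝ)) * ∫ u in Metric.sphere (0:EuclideanSpace ℝ (Fin d)) 1,
          ρK u ^ ((d : ℝ) + p) * ρL u ^ (-p) ∂(μH[(d:ℝ)-1])) ^ (d : ℝ)
        = ((1 / (d : ℝ)) * ∫ u in Metric.sphere (0:EuclideanSpace ℝ (Fin d)) 1,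
              ρK u ^ (d : ℝ) ∂(μH[(d:ℝ)-1])) ^ ((d : ℝ) + p)
          * ((1 / (d : ℝ)) * ∫ u in Metric.sphere (0:EuclideanSpace ℝ (Fin d)) 1,
              ρL u ^ (d : ℝ) ∂(μH[(d:ℝ)-1])) ^ (-p))
      ↔ ∃ c : ℝ, 0 < c ∧
          (fun u => ρK u)
            =ᵐ[(μH[(d:ℝ)-1]).restrict (Metric.sphere (0:EuclideanSpace ℝ (Fin d)) 1)]
          fun u => c * ρL u) := by
  set S := Metric.sphere (0:EuclideanSpace ℝ (Fin d)) 1 with hSdef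
  set μ := (μH[(d:ℝ)-1]).restrict S with hμdef
  have hd0 : (0:ℝ) < d := by exact_mod_cast hd
  have hp0 : (0:ℝ) < p := by linarith
  have hdp : (0:ℝ) < (d:ℝ) + p := by linarith
  set q : ℝ := ((d:ℝ) + p) / d with hqdef
  set q' : ℝ := ((d:ℝ) + p) / p with hq'def
  have hq : 1 < q := (one_lt_div hd0).2 (by linarith)
  have hq' : 1 < q' := (one_lt_div hp0).2 (by linarith)
  have hqq : 1/q + 1/q' = 1 := by
    rw [hqdef, hq'def, one_div_div, one_div_div]
    field_simp
  have h1q : 1/q = (d:ℝ)/((d:ℝ)+p) := one_div_div _ _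
  have h1q' : 1/q' = p/((d:ℝ)+p) := one_div_div _ _
  set r : ℝ := p * d / ((d:ℝ) + p) with hrdef
  have hr0 : 0 < r := by positivity
  have hdq : (d:ℝ) * q = (d:ℝ) + p := by
    rw [hqdef]; field_simp
  have hrq : r * q = p := by
    rw [hrdef, hqdef]; field_simp
  have hrq' : r * q' = (d:ℝ) := by
    rw [hrdef, hq'def]; field_simp
  set U : EuclideanSpace ℝ (Fin d) → ℝ := fun x => ρK x ^ (d:ℝ) * ρL x ^ (-r) with hUdef
  set V : EuclideanSpace ℝ (Fin d) → ℝ := fun x => ρL x ^ r with hVdef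
  -- a.e. identities
  have hUq_eq : (fun x => U x ^ q) =ᵐ[μ] fun x => ρK x ^ ((d:ℝ)+p) * ρL x ^ (-p) := by
    filter_upwards [hρL_pos] with x hg
    rw [hUdef]
    simp only
    rw [Real.mul_rpow (Real.rpow_nonneg (hρK_nonneg x) _) (Real.rpow_nonneg hg.le _),
      ← Real.rpow_mul (hρK_nonneg x), ← Real.rpow_mul hg.le, hdq]
    congr 1
    rw [neg_mul, hrq]
  have hVq_eq : (fun x => V x ^ q') =ᵐ[μ] fun x => ρL x ^ (d:ℝ) := by
    filter_upwards [hρL_pos] with x hg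
    rw [hVdef]
    simp only
    rw [← Real.rpow_mul hg.le, hrq']
  have hUV_eq : (fun x => U x * V x) =ᵐ[μ] fun x => ρK x ^ (d:ℝ) := by
    filter_upwards [hρL_pos] with x hg
    rw [hUdef, hVdef]
    simp only
    rw [mul_assoc, ← Real.rpow_add hg, neg_add_cancel, Real.rpow_zero, mul_one]
  -- measurability & positivity
  have hUm : AEMeasurable U μ :=
    ((hρK_meas.pow_const _).mul (hρL_meas.pow_const _)).aemeasurable
  have hVm : AEMeasurable V μ := (hρL_meas.pow_const _).aemeasurable
  have hU0 : 0 ≤ᵐ[μ] U := by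
    filter_upwards [hρL_pos] with x hg
    exact mul_nonneg (Real.rpow_nonneg (hρK_nonneg x) _) (Real.rpow_nonneg hg.le _)
  have hV0 : 0 ≤ᵐ[μ] V := by
    filter_upwards [hρL_pos] with x hg
    exact Real.rpow_nonneg hg.le _
  -- integrability
  have hUq_int : Integrable (fun x => U x ^ q) μ := hmix_int.congr hUq_eq.symm
  have hVq_int : Integrable (fun x => V x ^ q') μ := hL_int.congr hVq_eq.symm
  -- integrals
  set Ai := ∫ x, ρK x ^ ((d:ℝ)+p) * ρL x ^ (-p) ∂μ with hAidef
  set Bi := ∫ x, ρK x ^ (d:ℝ) ∂μ with hBidef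
  set Ci := ∫ x, ρL x ^ (d:ℝ) ∂μ with hCidef
  have hAeq : ∫ x, U x ^ q ∂μ = Ai := integral_congr_ae hUq_eq
  have hCeq : ∫ x, V x ^ q' ∂μ = Ci := integral_congr_ae hVq_eq
  have hBeq : ∫ x, U x * V x ∂μ = Bi := integral_congr_ae hUV_eq
  have hB : 0 < Bi := by
    have h := mul_pos hd0 hvolK_pos
    have e : (d:ℝ) * ((1/(d:ℝ)) * Bi) = Bi := by field_simp
    calc (0:ℝ) < (d:ℝ) * ((1/(d:ℝ)) * Bi) := h
      _ = Bi := e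
  have hC : 0 < Ci := by
    have h := mul_pos hd0 hvolL_pos
    have e : (d:ℝ) * ((1/(d:ℝ)) * Ci) = Ci := by field_simp
    calc (0:ℝ) < (d:ℝ) * ((1/(d:ℝ)) * Ci) := h
      _ = Ci := e
  have hAnn : 0 ≤ Ai := by
    refine integral_nonneg_of_ae ?_
    filter_upwards [hρL_pos] with x hg
    exact mul_nonneg (Real.rpow_nonneg (hρK_nonneg x) _) (Real.rpow_nonneg hg.le _)
  have hA : 0 < Ai := by
    rcases lt_or_eq_of_le hAnn with h | h
    · exact h
    · exfalso
      have hz : (fun x => ρK x ^ ((d:ℝ)+p) * ρL x ^ (-p)) =ᵐ[μ] 0 := by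
        refine (integral_eq_zero_iff_of_nonneg_ae ?_ hmix_int).1 h.symm
        filter_upwards [hρL_pos] with x hg
        exact mul_nonneg (Real.rpow_nonneg (hρK_nonneg x) _) (Real.rpow_nonneg hg.le _)
      have hzB : (fun x => ρK x ^ (d:ℝ)) =ᵐ[μ] 0 := by
        filter_upwards [hz, hρL_pos] with x hx hg
        simp only [Pi.zero_apply] at hx ⊢
        have hgp : 0 < ρL x ^ (-p) := Real.rpow_pos_of_pos hg _
        have hK0 : ρK x ^ ((d:ℝ)+p) = 0 := by
          rcases mul_eq_zero.1 hx with h' | h'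
          · exact h'
          · exact absurd h' hgp.ne'
        have : ρK x = 0 := by
          by_contra hne
          have : 0 < ρK x := lt_of_le_of_ne (hρK_nonneg x) (Ne.symm hne)
          exact absurd hK0 (Real.rpow_pos_of_pos this _).ne'
        rw [this, Real.zero_rpow hd0.ne']
      have : Bi = 0 := by
        rw [hBidef, integral_congr_ae hzB]
        simp
      linarith
  -- core Hölder
  have core := holder_core μ hq hq' hqq hUm hVm hU0 hV0 hUq_int hVq_int
    (by rw [hAeq]; exact hA) (by rw [hCeq]; exact hC)
  rw [hAeq, hCeq, hBeq, h1q, h1q'] at core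
  -- logs
  set D : ℝ := 1 / (d:ℝ) with hDdef
  have hD : 0 < D := by positivity
  set la := Real.log Ai with hladef
  set lb := Real.log Bi with hlbdef
  set lc := Real.log Ci with hlcdef
  set ld := Real.log D with hlddef
  have hDA : 0 < D * Ai := mul_pos hD hA
  have hDB : 0 < D * Bi := mul_pos hD hB
  have hDC : 0 < D * Ci := mul_pos hD hC
  have hLHSpos : 0 < (D * Ai) ^ (d:ℝ) := Real.rpow_pos_of_pos hDA _
  have hRHSpos : 0 < (D * Bi) ^ ((d:ℝ)+p) * (D * Ci) ^ (-p) :=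
    mul_pos (Real.rpow_pos_of_pos hDB _) (Real.rpow_pos_of_pos hDC _)
  have hGpos : 0 < Ai ^ ((d:ℝ)/((d:ℝ)+p)) * Ci ^ (p/((d:ℝ)+p)) :=
    mul_pos (Real.rpow_pos_of_pos hA _) (Real.rpow_pos_of_pos hC _)
  have llhs : Real.log ((D * Ai) ^ (d:ℝ)) = (d:ℝ) * (ld + la) := by
    rw [Real.log_rpow hDA, Real.log_mul hD.ne' hA.ne']
  have lrhs : Real.log ((D * Bi) ^ ((d:ℝ)+p) * (D * Ci) ^ (-p))
      = ((d:ℝ)+p) * (ld + lb) + (-p) * (ld + lc) := by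
    rw [Real.log_mul (Real.rpow_pos_of_pos hDB _).ne' (Real.rpow_pos_of_pos hDC _).ne',
      Real.log_rpow hDB, Real.log_rpow hDC, Real.log_mul hD.ne' hB.ne',
      Real.log_mul hD.ne' hC.ne']
  have lg : Real.log (Ai ^ ((d:ℝ)/((d:ℝ)+p)) * Ci ^ (p/((d:ℝ)+p)))
      = ((d:ℝ)/((d:ℝ)+p)) * la + (p/((d:ℝ)+p)) * lc := by
    rw [Real.log_mul (Real.rpow_pos_of_pos hA _).ne' (Real.rpow_pos_of_pos hC _).ne',
      Real.log_rpow hA, Real.log_rpow hC]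
  have hkey : ((d:ℝ)+p) * (((d:ℝ)/((d:ℝ)+p)) * la + (p/((d:ℝ)+p)) * lc - lb)
      = (d:ℝ) * (ld + la) - (((d:ℝ)+p) * (ld + lb) + (-p) * (ld + lc)) := by
    field_simp
    ring
  -- equivalence of the two formulations of the inequality
  have halg1 : ((D * Ai) ^ (d:ℝ) ≥ (D * Bi) ^ ((d:ℝ)+p) * (D * Ci) ^ (-p))
      ↔ Bi ≤ Ai ^ ((d:ℝ)/((d:ℝ)+p)) * Ci ^ (p/((d:ℝ)+p)) := by
    rw [ge_iff_le, ← Real.log_le_log_iff hRHSpos hLHSpos,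
      ← Real.log_le_log_iff hB hGpos, llhs, lrhs, lg]
    constructor
    · intro h
      have h0 : 0 ≤ ((d:ℝ)+p) * (((d:ℝ)/((d:ℝ)+p)) * la + (p/((d:ℝ)+p)) * lc - lb) := by
        rw [hkey]; linarith
      have hE := (mul_nonneg_iff_of_pos_left hdp).1 h0
      linarith
    · intro h
      have h0 : 0 ≤ ((d:ℝ)+p) * (((d:ℝ)/((d:ℝ)+p)) * la + (p/((d:ℝ)+p)) * lc - lb) :=
        mul_nonneg hdp.le (by linarith)
      rw [hkey] at h0
      linarith
  have halg2 : ((D * Ai) ^ (d:ℝ) = (D * Bi) ^ ((d:ℝ)+p) * (D * Ci) ^ (-p))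
      ↔ Bi = Ai ^ ((d:ℝ)/((d:ℝ)+p)) * Ci ^ (p/((d:ℝ)+p)) := by
    constructor
    · intro h
      apply Real.log_injOn_pos (Set.mem_Ioi.2 hB) (Set.mem_Ioi.2 hGpos)
      have hl := congrArg Real.log h
      rw [llhs, lrhs] at hl
      rw [lg]
      have h2 : ((d:ℝ)+p) * (((d:ℝ)/((d:ℝ)+p)) * la + (p/((d:ℝ)+p)) * lc - lb) = 0 := by
        rw [hkey]; linarith
      have h3 : ((d:ℝ)/((d:ℝ)+p)) * la + (p/((d:ℝ)+p)) * lc - lb = 0 := by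
        rcases mul_eq_zero.1 h2 with h' | h'
        · exact absurd h' hdp.ne'
        · exact h'
      rw [← hlbdef]; linarith
    · intro h
      apply Real.log_injOn_pos (Set.mem_Ioi.2 hLHSpos) (Set.mem_Ioi.2 hRHSpos)
      have hl := congrArg Real.log h
      rw [lg] at hl
      rw [llhs, lrhs]
      rw [← hlbdef] at hl
      have hE : ((d:ℝ)/((d:ℝ)+p)) * la + (p/((d:ℝ)+p)) * lc - lb = 0 := by linarith
      have h0 : ((d:ℝ)+p) * (((d:ℝ)/((d:ℝ)+p)) * la + (p/((d:ℝ)+p)) * lc - lb) = 0 := by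
        rw [hE, mul_zero]
      rw [hkey] at h0
      linarith
  refine ⟨halg1.2 core.1, ?_⟩
  rw [halg2]
  rw [core.2]
  constructor
  · intro hprop
    refine ⟨(Ai/Ci) ^ (1/((d:ℝ)+p)), Real.rpow_pos_of_pos (div_pos hA hC) _, ?_⟩
    filter_upwards [hprop, hUq_eq, hVq_eq, hρL_pos] with x hx hxU hxV hg
    rw [hxU, hxV] at hx
    -- hx : Ci * (ρK x ^ (d+p) * ρL x ^ (-p)) = Ai * ρL x ^ d
    have h1 : ρL x ^ (-p) * ρL x ^ p = 1 := by
      rw [← Real.rpow_add hg]; norm_num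
    have h2 : ρL x ^ (d:ℝ) * ρL x ^ p = ρL x ^ ((d:ℝ)+p) := by
      rw [← Real.rpow_add hg]
    have hCiF : Ci * ρK x ^ ((d:ℝ)+p) = Ai * ρL x ^ ((d:ℝ)+p) := by
      calc Ci * ρK x ^ ((d:ℝ)+p)
          = Ci * ρK x ^ ((d:ℝ)+p) * (ρL x ^ (-p) * ρL x ^ p) := by rw [h1, mul_one]
        _ = (Ci * (ρK x ^ ((d:ℝ)+p) * ρL x ^ (-p))) * ρL x ^ p := by ring
        _ = (Ai * ρL x ^ (d:ℝ)) * ρL x ^ p := by rw [hx]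
        _ = Ai * ρL x ^ ((d:ℝ)+p) := by rw [mul_assoc, h2]
    have hF : ρK x ^ ((d:ℝ)+p) = (Ai/Ci) * ρL x ^ ((d:ℝ)+p) := by
      field_simp
      linarith
    have := congrArg (fun t => t ^ (1/((d:ℝ)+p))) hF
    rw [← Real.rpow_mul (hρK_nonneg x), mul_one_div, div_self hdp.ne', Real.rpow_one,
      Real.mul_rpow (div_pos hA hC).le (Real.rpow_nonneg hg.le _),
      ← Real.rpow_mul hg.le, mul_one_div, div_self hdp.ne', Real.rpow_one] at this
    exact this
  · rintro ⟨c, hc, hfg⟩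
    have hAi : Ai = c ^ ((d:ℝ)+p) * Ci := by
      rw [hAidef, hCidef, ← integral_const_mul]
      apply integral_congr_ae
      filter_upwards [hfg, hρL_pos] with x hx hg
      rw [hx, Real.mul_rpow hc.le hg.le, mul_assoc, ← Real.rpow_add hg]
      congr 2
      ring
    filter_upwards [hfg, hUq_eq, hVq_eq, hρL_pos] with x hx hxU hxV hg
    rw [hxU, hxV, hx, hAi, Real.mul_rpow hc.le hg.le]
    have h2 : ρL x ^ ((d:ℝ)+p) * ρL x ^ (-p) = ρL x ^ (d:ℝ) := by
      rw [← Real.rpow_add hg]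
      congr 1
      ring
    calc Ci * (c ^ ((d:ℝ)+p) * ρL x ^ ((d:ℝ)+p) * ρL x ^ (-p))
        = c ^ ((d:ℝ)+p) * Ci * (ρL x ^ ((d:ℝ)+p) * ρL x ^ (-p)) := by ring
      _ = c ^ ((d:ℝ)+p) * Ci * ρL x ^ (d:ℝ) := by rw [h2]
end

section
/- Let p ≥ 1 and n ≥ 1. For a probability density g on R^n with finite p-th moment and u ∈ S^{n-1}, suppose g(|x|u) = a(u)(1 + |b(u)x|^p)^{-1/(1-λ)} for a.e. x ∈ R^n with n/(n+p) < λ < 1 and a(u), b(u) > 0, and suppose ∫_{R^n} g(|x|u)^λ dx = γ ∫_{R^n} g(|x|u) dx for a constant γ > 0 independent of u. Then a(u) is constant a.e. on S^{n-1}, equal to ((λp - n(1-λ))γ/(λp))^{1/(λ-1)}. -/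
open MeasureTheory

section RadialAux
open Set Real Filter Topology

lemma req_int {p β s k : ℝ} (hp : 1 ≤ p) (hβ : 0 < β) (hk : 0 ≤ k) (hks : k + 1 < s * p) :
    IntegrableOn (fun y : ℝ => y ^ k * (1 + (β * y) ^ p) ^ (-s)) (Ioi 0) := by
  have hp0 : 0 < p := lt_of_lt_of_le one_pos hp
  have hs : 0 < s := by nlinarith
  have hmeas : Measurable fun y : ℝ => y ^ k * (1 + (β * y) ^ p) ^ (-s) := by fun_prop
  rw [show Ioi (0:ℝ) = Ioc 0 1 ∪ Ioi 1 from (Ioc_union_Ioi_eq_Ioi zero_le_one).symm]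
  refine IntegrableOn.union ?_ ?_
  · refine Measure.integrableOn_of_bounded measure_Ioc_lt_top.ne
      hmeas.aestronglyMeasurable (M := 1) ?_
    filter_upwards [ae_restrict_mem measurableSet_Ioc] with y hy
    have hy0 : (0:ℝ) < y := hy.1
    have h1 : (0:ℝ) ≤ (β * y) ^ p := rpow_nonneg (by positivity) _
    have h2 : (0:ℝ) ≤ y ^ k := rpow_nonneg hy0.le _
    have h3 : y ^ k ≤ 1 := rpow_le_one hy0.le hy.2 hk
    have h4 : (1 + (β * y) ^ p) ^ (-s) ≤ 1 :=
      rpow_le_one_of_one_le_of_nonpos (by linarith) (by linarith)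
    have h5 : (0:ℝ) ≤ (1 + (β * y) ^ p) ^ (-s) := rpow_nonneg (by linarith) _
    rw [Real.norm_eq_abs, abs_of_nonneg (mul_nonneg h2 h5)]
    calc y ^ k * (1 + (β * y) ^ p) ^ (-s) ≤ 1 * 1 := mul_le_mul h3 h4 h5 zero_le_one
      _ = 1 := by ring
  · refine Integrable.mono' (g := fun y : ℝ => β ^ (-(s*p)) * y ^ (k - s*p))
      (((integrableOn_Ioi_rpow_of_lt (by linarith) one_pos).const_mul _))
      hmeas.aestronglyMeasurable ?_
    filter_upwards [ae_restrict_mem measurableSet_Ioi] with y hy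
    have hy0 : (0:ℝ) < y := lt_trans one_pos hy
    have hby : (0:ℝ) < β * y := by positivity
    have h2 : (0:ℝ) ≤ y ^ k := rpow_nonneg hy0.le _
    have h5 : (0:ℝ) ≤ (1 + (β * y) ^ p) ^ (-s) := by
      apply rpow_nonneg; positivity
    rw [Real.norm_eq_abs, abs_of_nonneg (mul_nonneg h2 h5)]
    have hb1 : (1 + (β * y) ^ p) ^ (-s) ≤ ((β * y) ^ p) ^ (-s) := by
      apply rpow_le_rpow_of_nonpos (rpow_pos_of_pos hby p) (by linarith [rpow_nonneg hby.le p])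
        (by linarith)
    have hb2 : ((β * y) ^ p) ^ (-s) = β ^ (-(s*p)) * y ^ (-(s*p)) := by
      rw [← Real.rpow_mul hby.le, show p * (-s) = -(s*p) by ring, Real.mul_rpow hβ.le hy0.le]
    calc y ^ k * (1 + (β * y) ^ p) ^ (-s) ≤ y ^ k * ((β * y) ^ p) ^ (-s) :=
          mul_le_mul_of_nonneg_left hb1 h2
      _ = β ^ (-(s*p)) * y ^ (k - s*p) := by
          rw [hb2, ← mul_assoc, mul_comm (y ^ k), mul_assoc, ← Real.rpow_add hy0]
          ring_nf

lemma req_intS {p β s : ℝ} {n : ℕ} (hn : 1 ≤ n) (hp : 1 ≤ p) (hβ : 0 < β)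
    (h : (n:ℝ) < s * p) :
    IntegrableOn (fun y : ℝ => y ^ (n-1) * (1 + (β * y) ^ p) ^ (-s)) (Ioi 0) := by
  have hn1 : (1:ℝ) ≤ (n:ℝ) := by exact_mod_cast hn
  have hn' : ((n:ℝ) - 1) = ((n-1 : ℕ) : ℝ) := by rw [Nat.cast_sub hn, Nat.cast_one]
  have hint := req_int (s := s) (k := (n:ℝ) - 1) hp hβ (by linarith) (by linarith)
  refine hint.congr_fun (fun y hy => ?_) measurableSet_Ioi
  beta_reduce
  rw [hn', Real.rpow_natCast]

lemma req_intP {p β s : ℝ} {n : ℕ} (hn : 1 ≤ n) (hp : 1 ≤ p) (hβ : 0 < β)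
    (h : (n:ℝ) + p < s * p) :
    IntegrableOn (fun y : ℝ => y ^ (n-1) * (y ^ p * (1 + (β * y) ^ p) ^ (-s))) (Ioi 0) := by
  have hn1 : (1:ℝ) ≤ (n:ℝ) := by exact_mod_cast hn
  have hn' : ((n:ℝ) - 1) = ((n-1 : ℕ) : ℝ) := by rw [Nat.cast_sub hn, Nat.cast_one]
  have hint := req_int (s := s) (k := (n:ℝ) - 1 + p) hp hβ
    (by have : 0 < p := by linarith
        linarith) (by linarith)
  refine hint.congr_fun (fun y hy => ?_) measurableSet_Ioi
  have hy0 : (0:ℝ) < y := hy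
  beta_reduce
  rw [Real.rpow_add hy0, hn', Real.rpow_natCast, mul_assoc]

lemma req_intS' {p β α : ℝ} {n : ℕ} (hn : 1 ≤ n) (hp : 1 ≤ p) (hβ : 0 < β)
    (h : (n:ℝ) < (α - 1) * p) :
    IntegrableOn (fun y : ℝ => y ^ (n-1) * (1 + (β * y) ^ p) ^ (1 - α)) (Ioi 0) := by
  refine (req_intS (s := α - 1) hn hp hβ h).congr_fun (fun y hy => ?_) measurableSet_Ioi
  rw [show -(α - 1) = 1 - α by ring]

lemma req_parts {p β α : ℝ} {n : ℕ} (hn : 1 ≤ n) (hp : 1 ≤ p) (hβ : 0 < β) (hα : 1 < α)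
    (hd : (n:ℝ) < (α - 1) * p) :
    ∫ y in Ioi (0:ℝ), ((n:ℝ) * (y ^ (n-1) * (1 + (β*y)^p) ^ (1-α))
        - (α-1) * p * β^p * (y ^ (n-1) * (y ^ p * (1 + (β*y)^p) ^ (-α)))) = 0 := by
  have hp0 : 0 < p := lt_of_lt_of_le one_pos hp
  set F : ℝ → ℝ := fun y => y ^ n * (1 + (β*y)^p)^(1-α) with hF
  set G : ℝ → ℝ := fun y => ((n:ℝ) * (y ^ (n-1) * (1 + (β*y)^p) ^ (1-α))
        - (α-1) * p * β^p * (y ^ (n-1) * (y ^ p * (1 + (β*y)^p) ^ (-α)))) with hG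
  have i1 := req_intS' hn hp hβ hd
  have i2 : IntegrableOn (fun y : ℝ => y ^ (n-1) * (y ^ p * (1 + (β*y)^p) ^ (-α))) (Ioi 0) :=
    req_intP hn hp hβ (by nlinarith)
  have hint : IntegrableOn G (Ioi 0) := by
    rw [hG]
    exact (i1.const_mul _).sub (i2.const_mul _)
  have hderiv : ∀ y ∈ Ioi (0:ℝ), HasDerivAt F (G y) y := by
    intro y hy
    have hy0 : (0:ℝ) < y := hy
    have hby : (0:ℝ) < β * y := by positivity
    have hw : HasDerivAt (fun y : ℝ => (β*y)^p) (p * (β*y)^(p-1) * β) y := by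
      have h1 : HasDerivAt (fun y : ℝ => β * y) β y := by
        simpa using (hasDerivAt_id y).const_mul β
      have h2 : HasDerivAt (fun t : ℝ => t ^ p) (p * (β*y)^(p-1)) (β*y) :=
        Real.hasDerivAt_rpow_const (Or.inl hby.ne')
      exact h2.comp y h1
    have hS : (0:ℝ) < 1 + (β*y)^p := by
      have := rpow_nonneg hby.le p; linarith
    have hG1 : HasDerivAt (fun y : ℝ => 1 + (β*y)^p) (p * (β*y)^(p-1) * β) y :=
      hw.const_add 1
    have h3 : HasDerivAt (fun t : ℝ => t ^ (1-α)) ((1-α) * (1 + (β*y)^p) ^ (1-α-1)) (1 + (β*y)^p) :=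
      Real.hasDerivAt_rpow_const (Or.inl hS.ne')
    have hH : HasDerivAt (fun y : ℝ => (1 + (β*y)^p)^(1-α))
        ((1-α) * (1 + (β*y)^p) ^ (1-α-1) * (p * (β*y)^(p-1) * β)) y := by have := h3.comp y hG1; exact this
    have hFd : HasDerivAt F ((↑n * y ^ (n-1)) * (1 + (β*y)^p)^(1-α)
        + y ^ n * ((1-α) * (1 + (β*y)^p) ^ (1-α-1) * (p * (β*y)^(p-1) * β))) y :=
      (hasDerivAt_pow n y).mul hH
    convert hFd using 1
    simp only [hG]
    have e0 : (1:ℝ) - α - 1 = -α := by ring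
    have e1 : (β*y) ^ (p-1) = β ^ (p-1) * y ^ (p-1) := Real.mul_rpow hβ.le hy0.le
    have e2 : β ^ (p-1) * β = β ^ p := by
      rw [← Real.rpow_add_one hβ.ne' (p-1)]; ring_nf
    have e3 : (y:ℝ) ^ p = y * y ^ (p-1) := by
      rw [show p = 1 + (p-1) by ring, Real.rpow_add hy0, Real.rpow_one]; ring_nf
    have e4 : y ^ n = y ^ (n-1) * y := by
      rw [← pow_succ, Nat.sub_add_cancel hn]
    rw [e0, e1, e4, e3]
    have e2' : β ^ p = β ^ (p-1) * β := e2.symm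
    rw [e2']
    ring
  have hcont : ContinuousWithinAt F (Ici 0) 0 := by
    apply ContinuousAt.continuousWithinAt
    have c1 : ContinuousAt (fun y : ℝ => (β*y)^p) 0 := by
      have h2 : ContinuousAt (fun t : ℝ => t ^ p) (β * 0) :=
        Real.continuousAt_rpow_const _ _ (Or.inr hp0.le)
      exact h2.comp ((continuous_const.mul continuous_id).continuousAt)
    have hval : (1:ℝ) + (β*0)^p ≠ 0 := by
      rw [mul_zero, Real.zero_rpow hp0.ne']; norm_num
    have c3 : ContinuousAt (fun y : ℝ => 1 + (β*y)^p) 0 := continuousAt_const.add c1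
    have c4 : ContinuousAt (fun y : ℝ => (1 + (β*y)^p) ^ (1-α)) 0 := by
      apply ContinuousAt.rpow_const c3 (Or.inl ?_)
      simpa using hval
    exact ((continuous_pow n).continuousAt).mul c4
  have htend : Tendsto F atTop (𝓝 0) := by
    have hε : (0:ℝ) < (α-1)*p - n := by linarith
    have hlim : Tendsto (fun y : ℝ => β ^ (p*(1-α)) * y ^ (-(((α-1))*p - n))) atTop (𝓝 0) := by
      have := (tendsto_rpow_neg_atTop hε).const_mul (β ^ (p*(1-α)))
      simpa using this
    apply squeeze_zero' ?_ ?_ hlim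
    · filter_upwards [eventually_ge_atTop (1:ℝ)] with y hy
      have hy0 : (0:ℝ) < y := lt_of_lt_of_le one_pos hy
      have hS : (0:ℝ) < 1 + (β*y)^p := by
        have := rpow_nonneg (by positivity : (0:ℝ) ≤ β*y) p; linarith
      exact mul_nonneg (pow_nonneg hy0.le n) (rpow_nonneg hS.le _)
    · filter_upwards [eventually_ge_atTop (1:ℝ)] with y hy
      have hy0 : (0:ℝ) < y := lt_of_lt_of_le one_pos hy
      have hby : (0:ℝ) < β * y := by positivity
      have hbyp : (0:ℝ) < (β*y)^p := rpow_pos_of_pos hby p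
      have hb1 : (1 + (β*y)^p) ^ (1-α) ≤ ((β*y)^p) ^ (1-α) :=
        rpow_le_rpow_of_nonpos hbyp (by linarith) (by linarith)
      have e5 : ((β*y)^p) ^ (1-α) = β ^ (p*(1-α)) * y ^ (p*(1-α)) := by
        rw [← Real.rpow_mul hby.le, Real.mul_rpow hβ.le hy0.le]
      calc F y ≤ y ^ n * ((β*y)^p) ^ (1-α) :=
            mul_le_mul_of_nonneg_left hb1 (pow_nonneg hy0.le n)
        _ = β ^ (p*(1-α)) * y ^ (-((α-1)*p - n)) := by
            rw [e5, ← Real.rpow_natCast y n, ← mul_assoc, mul_comm (y ^ (n:ℝ)),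
              mul_assoc, ← Real.rpow_add hy0]
            ring_nf
  have key := integral_Ioi_of_hasDerivAt_of_tendsto hcont hderiv hint htend
  have hF0 : F 0 = 0 := by
    simp [hF, zero_pow (by omega : n ≠ 0)]
  rw [hF0, sub_zero] at key
  exact key

end RadialAux

/-- If a probability density `g` on `ℝⁿ` with finite `p`-th moment satisfies, for each
`u ∈ S^{n-1}`, `g(|x|u) = a(u)(1 + |b(u)x|^p)^{-1/(1-λ)}` for a.e. `x`, where
`n/(n+p) < λ < 1` and `a(u), b(u) > 0`, and if
`∫ g(|x|u)^λ dx = γ ∫ g(|x|u) dx` with `γ > 0` independent of `u`, then `a(u)` is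
constant on the sphere, equal to `((λp - n(1-λ))γ/(λp))^{1/(λ-1)}`. -/
theorem radial_equality_constant (n : ℕ) (hn : 1 ≤ n) (p lam : ℝ) (hp : 1 ≤ p)
    (hlam : (n : ℝ) / ((n : ℝ) + p) < lam) (hlam1 : lam < 1)
    (g : EuclideanSpace ℝ (Fin n) → ℝ)
    (hg_nonneg : ∀ x, 0 ≤ g x) (hg_int : Integrable g volume)
    (hg_one : ∫ x, g x = 1)
    (hmom : Integrable (fun x : EuclideanSpace ℝ (Fin n) => ‖x‖ ^ p * g x) volume)
    (a b : EuclideanSpace ℝ (Fin n) → ℝ)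
    (ha_pos : ∀ u, ‖u‖ = 1 → 0 < a u) (hb_pos : ∀ u, ‖u‖ = 1 → 0 < b u)
    (hform : ∀ u : EuclideanSpace ℝ (Fin n), ‖u‖ = 1 →
      ∀ᵐ x : EuclideanSpace ℝ (Fin n) ∂volume,
        g (‖x‖ • u) = a u * (1 + (b u * ‖x‖) ^ p) ^ (-(1 / (1 - lam))))
    (γ : ℝ) (hγ : 0 < γ)
    (hratio : ∀ u : EuclideanSpace ℝ (Fin n), ‖u‖ = 1 →
      (∫ x : EuclideanSpace ℝ (Fin n), g (‖x‖ • u) ^ lam)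
        = γ * ∫ x : EuclideanSpace ℝ (Fin n), g (‖x‖ • u)) :
    ∀ u : EuclideanSpace ℝ (Fin n), ‖u‖ = 1 →
      a u = ((lam * p - (n : ℝ) * (1 - lam)) * γ / (lam * p)) ^ (1 / (lam - 1)) := by
  classical
  intro u hu
  have hA : 0 < a u := ha_pos u hu
  have hB : 0 < b u := hb_pos u hu
  set A := a u with hAdef
  set β := b u with hBdef
  have hp0 : 0 < p := lt_of_lt_of_le one_pos hp
  have hn1 : (1:ℝ) ≤ (n:ℝ) := by exact_mod_cast hn
  have h1l : 0 < 1 - lam := by linarith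
  have hnp : (0:ℝ) < (n:ℝ) + p := by linarith
  have hlam0 : 0 < lam := lt_trans (div_pos (by linarith) hnp) hlam
  set α := 1 / (1 - lam) with hαdef
  have hα1 : 1 < α := by
    rw [hαdef, lt_div_iff₀ h1l]; linarith
  have hkey : (n:ℝ) * (1 - lam) < lam * p := by
    have h := (div_lt_iff₀ hnp).mp hlam
    nlinarith
  have hαlam : α - 1 = lam * α := by
    rw [hαdef]; field_simp; ring
  have hd : (n:ℝ) < (α - 1) * p := by
    have hKeq : (α - 1) * p = lam * p / (1 - lam) := by
      rw [hαlam, hαdef]; ring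
    rw [hKeq, lt_div_iff₀ h1l]; linarith
  have hfu := hform u hu
  haveI : Nontrivial (EuclideanSpace ℝ (Fin n)) :=
    Module.nontrivial_of_finrank_pos (R := ℝ)
      (by rw [finrank_euclideanSpace_fin]; omega)
  set c := (volume (Metric.ball (0 : EuclideanSpace ℝ (Fin n)) 1)).toReal with hcdef
  have hc : 0 < c := by
    rw [hcdef]
    exact ENNReal.toReal_pos (Metric.measure_ball_pos volume 0 one_pos).ne' measure_ball_lt_top.ne
  -- polar decompositions
  have polar1 : (∫ x : EuclideanSpace ℝ (Fin n), (1 + (β * ‖x‖) ^ p) ^ (-α))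
      = (n : ℝ) * (c * ∫ y in Set.Ioi (0:ℝ), y ^ (n-1) * (1 + (β * y) ^ p) ^ (-α)) := by
    have h := integral_fun_norm_addHaar (volume : Measure (EuclideanSpace ℝ (Fin n)))
      (fun y : ℝ => (1 + (β * y) ^ p) ^ (-α))
    rw [finrank_euclideanSpace_fin] at h
    simpa [smul_eq_mul, nsmul_eq_mul, hcdef, measureReal_def] using h
  have polar2 : (∫ x : EuclideanSpace ℝ (Fin n), (1 + (β * ‖x‖) ^ p) ^ (1-α))
      = (n : ℝ) * (c * ∫ y in Set.Ioi (0:ℝ), y ^ (n-1) * (1 + (β * y) ^ p) ^ (1-α)) := by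
    have h := integral_fun_norm_addHaar (volume : Measure (EuclideanSpace ℝ (Fin n)))
      (fun y : ℝ => (1 + (β * y) ^ p) ^ (1-α))
    rw [finrank_euclideanSpace_fin] at h
    simpa [smul_eq_mul, nsmul_eq_mul, hcdef, measureReal_def] using h
  -- the three 1-d integrals
  set I1 := ∫ y in Set.Ioi (0:ℝ), y ^ (n-1) * (1 + (β * y) ^ p) ^ (-α) with hI1def
  set Il := ∫ y in Set.Ioi (0:ℝ), y ^ (n-1) * (1 + (β * y) ^ p) ^ (1-α) with hIldef
  set Ip := ∫ y in Set.Ioi (0:ℝ), y ^ (n-1) * (y ^ p * (1 + (β * y) ^ p) ^ (-α)) with hIpdef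
  -- integrabilities
  have iA : IntegrableOn (fun y : ℝ => y ^ (n-1) * (1 + (β * y) ^ p) ^ (-α)) (Set.Ioi 0) :=
    req_intS hn hp hB (by nlinarith)
  have iL : IntegrableOn (fun y : ℝ => y ^ (n-1) * (1 + (β * y) ^ p) ^ (1-α)) (Set.Ioi 0) :=
    req_intS' hn hp hB hd
  have iP : IntegrableOn (fun y : ℝ => y ^ (n-1) * (y ^ p * (1 + (β * y) ^ p) ^ (-α)))
      (Set.Ioi 0) := req_intP hn hp hB (by nlinarith)
  -- E1 : first moment equation
  have hE1 : (∫ x : EuclideanSpace ℝ (Fin n), g (‖x‖ • u))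
      = A * ((n : ℝ) * (c * I1)) := by
    have hcongr : (∫ x : EuclideanSpace ℝ (Fin n), g (‖x‖ • u))
        = ∫ x : EuclideanSpace ℝ (Fin n), A * (1 + (β * ‖x‖) ^ p) ^ (-α) := by
      refine integral_congr_ae ?_
      filter_upwards [hfu] with x hx
      rw [hx]
    rw [hcongr, integral_const_mul, polar1]
  -- E2 : lambda-power equation
  have hE2 : (∫ x : EuclideanSpace ℝ (Fin n), g (‖x‖ • u) ^ lam)
      = A ^ lam * ((n : ℝ) * (c * Il)) := by
    have hcongr : (∫ x : EuclideanSpace ℝ (Fin n), g (‖x‖ • u) ^ lam)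
        = ∫ x : EuclideanSpace ℝ (Fin n), A ^ lam * (1 + (β * ‖x‖) ^ p) ^ (1-α) := by
      refine integral_congr_ae ?_
      filter_upwards [hfu] with x hx
      have hSx : (0:ℝ) ≤ 1 + (β * ‖x‖) ^ p := by
        have := Real.rpow_nonneg (by positivity : (0:ℝ) ≤ β * ‖x‖) p
        linarith
      rw [hx, show -(1 / (1 - lam)) = -α from by rw [hαdef],
        Real.mul_rpow hA.le (Real.rpow_nonneg hSx _),
        ← Real.rpow_mul hSx, show -α * lam = 1 - α from by linarith [hαlam]]
    rw [hcongr, integral_const_mul, polar2]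
  -- E3 : pointwise splitting
  have hE3 : Il = I1 + β ^ p * Ip := by
    rw [hIldef]
    have hEq : Set.EqOn (fun y : ℝ => y ^ (n-1) * (1 + (β * y) ^ p) ^ (1-α))
        (fun y : ℝ => y ^ (n-1) * (1 + (β * y) ^ p) ^ (-α)
          + β ^ p * (y ^ (n-1) * (y ^ p * (1 + (β * y) ^ p) ^ (-α)))) (Set.Ioi 0) := by
      intro y hy
      have hy0 : (0:ℝ) < y := hy
      have hby : (0:ℝ) < β * y := by positivity
      have hS : (0:ℝ) < 1 + (β * y) ^ p := by
        have := Real.rpow_nonneg hby.le p; linarith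
      have hsplit : (1 + (β * y) ^ p) ^ (1-α) = (1 + (β * y) ^ p) * (1 + (β * y) ^ p) ^ (-α) := by
        rw [show (1:ℝ) - α = 1 + -α by ring, Real.rpow_add hS, Real.rpow_one]
      have hmul : (β * y) ^ p = β ^ p * y ^ p := Real.mul_rpow hB.le hy0.le
      simp only
      rw [hsplit, hmul]
      ring
    rw [setIntegral_congr_fun measurableSet_Ioi hEq,
      integral_add iA (iP.const_mul _), integral_const_mul]
  -- E4 : integration by parts
  have hE4 : (n:ℝ) * Il = (α - 1) * p * β ^ p * Ip := by
    have hparts := req_parts (α := α) hn hp hB hα1 hd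
    rw [integral_sub (iL.const_mul _) (iP.const_mul _), integral_const_mul,
      integral_const_mul, sub_eq_zero] at hparts
    rw [hIldef, hIpdef]
    exact hparts
  -- E5 : positivity of I1
  have hI1pos : 0 < I1 := by
    have hnonneg : 0 ≤ᶠ[ae (volume.restrict (Set.Ioi (0:ℝ)))]
        fun y : ℝ => y ^ (n-1) * (1 + (β * y) ^ p) ^ (-α) := by
      filter_upwards [ae_restrict_mem measurableSet_Ioi] with y hy
      have hy0 : (0:ℝ) < y := hy
      have hby : (0:ℝ) < β * y := by positivity
      have hS : (0:ℝ) < 1 + (β * y) ^ p := by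
        have := Real.rpow_nonneg hby.le p; linarith
      exact le_of_lt (mul_pos (pow_pos hy0 _) (Real.rpow_pos_of_pos hS _))
    have hsupp : Set.Ioi (0:ℝ) ⊆
        (Function.support fun y : ℝ => y ^ (n-1) * (1 + (β * y) ^ p) ^ (-α)) ∩ Set.Ioi 0 := by
      intro y hy
      have hy0 : (0:ℝ) < y := hy
      have hby : (0:ℝ) < β * y := by positivity
      have hS : (0:ℝ) < 1 + (β * y) ^ p := by
        have := Real.rpow_nonneg hby.le p; linarith
      exact ⟨(mul_pos (pow_pos hy0 _) (Real.rpow_pos_of_pos hS _)).ne', hy⟩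
    have hmeaspos : (0 : ENNReal) <
        volume ((Function.support fun y : ℝ => y ^ (n-1) * (1 + (β * y) ^ p) ^ (-α))
          ∩ Set.Ioi 0) := by
      refine lt_of_lt_of_le ?_ (measure_mono hsupp)
      simp [Real.volume_Ioi]
    rw [hI1def, setIntegral_pos_iff_support_of_nonneg_ae hnonneg iA]
    exact hmeaspos
  -- the linear algebra
  clear_value I1 Il Ip c A β α
  set K := (α - 1) * p with hKdef
  clear_value K
  have hQ : Il * (K - (n:ℝ)) = I1 * K := by
    linear_combination K * hE3 - hE4
  have hKn : 0 < K - (n:ℝ) := by linarith [hd, hn1]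
  have hKpos : 0 < K := by linarith [hd, hn1]
  have hIlpos : 0 < Il := by
    have h' : 0 < Il * (K - (n:ℝ)) := by rw [hQ]; exact mul_pos hI1pos hKpos
    rcases mul_pos_iff.mp h' with ⟨h1, _⟩ | ⟨_, h2⟩
    · exact h1
    · linarith
  -- combine with the ratio hypothesis
  have hEq := hratio u hu
  rw [hE1, hE2] at hEq
  have hsplitA : A ^ lam = A ^ (lam - 1) * A := by
    have h := Real.rpow_add_one hA.ne' (lam - 1)
    rwa [sub_add_cancel] at h
  have h2 : A ^ (lam - 1) * Il = γ * I1 := by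
    have hnc : (0:ℝ) < A * ((n:ℝ) * c) := by positivity
    apply mul_left_cancel₀ hnc.ne'
    linear_combination hEq - ((n:ℝ) * c * Il) * hsplitA
  have h3 : A ^ (lam - 1) * K = γ * (K - (n:ℝ)) := by
    apply mul_right_cancel₀ hIlpos.ne'
    linear_combination K * h2 - γ * hQ
  have hT : A ^ (lam - 1) = (lam * p - (n:ℝ) * (1 - lam)) * γ / (lam * p) := by
    have hKeq : K = lam * p / (1 - lam) := by
      rw [hKdef, hαlam, hαdef]; ring
    have hlp : lam * p ≠ 0 := by positivity
    rw [eq_div_iff hlp]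
    have hgoal : A ^ (lam - 1) * K * (1 - lam) = γ * (K - (n:ℝ)) * (1 - lam) := by
      linear_combination (1 - lam) * h3
    rw [hKeq] at hgoal
    field_simp at hgoal
    linarith [hgoal]
  rw [← hT, ← Real.rpow_mul hA.le,
    mul_one_div_cancel (by linarith : lam - 1 ≠ 0), Real.rpow_one]
end
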